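/- Let q ≥ 1 and, for 0 < a ≤ ρ, define λ(a, ρ) = ∫_1^{sinh(ρ)/sinh(a)} (v^{2q} − 1)^{−1/2} · sinh(a) · (1 + v² sinh(a)²)^{−1/2} dv. Fix ρ > 0. Then the function γ(a) = λ(a, ρ) on (0, ρ) is positive and continuous, satisfies γ(a) → 0 as a → 0⁺ and γ(a) → 0 as a → ρ⁻, and attains its maximum over (0, ρ) at exactly one point a* ∈ (0, ρ). -/

import Mathlib

open MeasureTheory intervalIntegral Real Set Filter Asymptotics

/-- The height at radius `ρ` of the profile curve of the r-catenoid with neck radius `a`. -/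
noncomputable def catLam (q a ρ : ℝ) : ℝ :=
  ∫ v in (1 : ℝ)..(Real.sinh ρ / Real.sinh a),
    (v ^ (2 * q) - 1) ^ (-(1 : ℝ) / 2) * Real.sinh a *
      (1 + v ^ 2 * Real.sinh a ^ 2) ^ (-(1 : ℝ) / 2)

noncomputable def gg (q v : ℝ) : ℝ := (v ^ (2*q) - 1) ^ (-(1:ℝ)/2)
noncomputable def kk (s v : ℝ) : ℝ := s * (1 + v^2*s^2) ^ (-(1:ℝ)/2)
noncomputable def kd (s v : ℝ) : ℝ := (1 + v^2*s^2) ^ (-(3:ℝ)/2)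
noncomputable def XX (ρ a : ℝ) : ℝ := Real.sinh ρ / Real.sinh a
noncomputable def AA (q ρ a : ℝ) : ℝ := ∫ v in (1:ℝ)..XX ρ a, gg q v * kd (Real.sinh a) v
noncomputable def BB (q ρ a : ℝ) : ℝ :=
  XX ρ a * gg q (XX ρ a) * (1 + Real.sinh ρ ^ 2) ^ (-(1:ℝ)/2)

section lemmas
variable {q ρ a v s x s₁ s₂ : ℝ}

lemma one_plus_pos : (0:ℝ) < 1 + v^2*s^2 := by positivity

lemma hbase (hq : 1 ≤ q) (hv : 1 < v) : 0 < v ^ (2*q) - 1 := by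
  have : (1:ℝ) < v ^ (2*q) := by
    rw [Real.one_lt_rpow_iff_of_pos (by linarith)]
    exact Or.inl ⟨hv, by linarith⟩
  linarith

lemma gg_pos (hq : 1 ≤ q) (hv : 1 < v) : 0 < gg q v :=
  Real.rpow_pos_of_pos (hbase hq hv) _

lemma gg_nonneg (hq : 1 ≤ q) (hv : 1 ≤ v) : 0 ≤ gg q v := by
  rcases eq_or_lt_of_le hv with h | h
  · simp [gg, ← h, Real.one_rpow]
  · exact (gg_pos hq h).le

lemma gg_le (hq : 1 ≤ q) (hv : 1 < v) : gg q v ≤ (v-1) ^ (-(1:ℝ)/2) := by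
  apply Real.rpow_le_rpow_of_nonpos (by linarith) ?_ (by norm_num)
  have h2 : v ^ (1:ℝ) ≤ v ^ (2*q) := Real.rpow_le_rpow_of_exponent_le hv.le (by linarith)
  rw [Real.rpow_one] at h2; linarith

lemma gg_meas : Measurable (gg q) := by unfold gg; fun_prop

lemma gg_contAt (hq : 1 ≤ q) (hv : 1 < v) : ContinuousAt (gg q) v := by
  have h1 : ContinuousAt (fun v : ℝ => v ^ (2*q) - 1) v := by
    exact (Real.continuousAt_rpow_const v (2*q) (Or.inl (by positivity))).sub continuousAt_const
  exact h1.rpow_const (Or.inl (ne_of_gt (hbase hq hv)))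

lemma gg_contOn (hq : 1 ≤ q) : ContinuousOn (gg q) {v : ℝ | 1 < v} := fun v hv =>
  (gg_contAt hq hv).continuousWithinAt

lemma kk_pos (hs : 0 < s) : 0 < kk s v := by
  have := @one_plus_pos v s
  exact mul_pos hs (Real.rpow_pos_of_pos this _)

lemma rpow_sq_inv {y : ℝ} (hy : 0 < y) : (y^2) ^ (-(1:ℝ)/2) = y⁻¹ := by
  rw [← Real.rpow_natCast y 2, ← Real.rpow_mul hy.le]
  norm_num [Real.rpow_neg_one]

lemma kk_le_inv (hs : 0 < s) (hv : 1 ≤ v) : kk s v ≤ v⁻¹ := by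
  have hv0 : 0 < v := lt_of_lt_of_le one_pos hv
  have hvs : 0 < v^2*s^2 := by positivity
  have h1 : (1+v^2*s^2)^(-(1:ℝ)/2) ≤ (v^2*s^2)^(-(1:ℝ)/2) :=
    Real.rpow_le_rpow_of_nonpos hvs (by linarith) (by norm_num)
  have h2 : (v^2*s^2)^(-(1:ℝ)/2) = (v*s)⁻¹ := by
    rw [show v^2*s^2 = (v*s)^2 by ring]
    exact rpow_sq_inv (by positivity)
  calc kk s v ≤ s * (v*s)⁻¹ := by
        rw [kk, ← h2]; exact mul_le_mul_of_nonneg_left h1 hs.le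
    _ = v⁻¹ := by
        rw [mul_comm v s, mul_inv, ← mul_assoc, mul_inv_cancel₀ (ne_of_gt hs), one_mul]

lemma kk_le_one (hs : 0 < s) (hv : 1 ≤ v) : kk s v ≤ 1 := by
  refine (kk_le_inv hs hv).trans ?_
  rw [inv_le_one_iff₀]; right; exact hv

lemma kd_pos : 0 < kd s v := Real.rpow_pos_of_pos one_plus_pos _

lemma kd_le_one : kd s v ≤ 1 := by
  have h := @one_plus_pos v s
  calc kd s v ≤ (1:ℝ) ^ (-(3:ℝ)/2) :=
        Real.rpow_le_rpow_of_nonpos one_pos (by nlinarith [sq_nonneg (v*s)]) (by norm_num)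
    _ = 1 := Real.one_rpow _

lemma kd_anti (h0 : 0 ≤ s₁) (h12 : s₁ ≤ s₂) : kd s₂ v ≤ kd s₁ v := by
  apply Real.rpow_le_rpow_of_nonpos (by positivity) ?_ (by norm_num)
  nlinarith [pow_le_pow_left₀ h0 h12 2, sq_nonneg v]

lemma hasDerivAt_kk (v s : ℝ) : HasDerivAt (fun s => kk s v) (kd s v) s := by
  have hu : (0:ℝ) < 1 + v^2*s^2 := one_plus_pos
  have h1 : HasDerivAt (fun s : ℝ => 1 + v^2*s^2) (v^2*(2*s)) s := by
    have := ((hasDerivAt_id s).pow 2).const_mul (v^2)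
    simpa using (this.const_add 1)
  have h2 : HasDerivAt (fun s : ℝ => (1 + v^2*s^2) ^ (-(1:ℝ)/2))
      (v^2*(2*s) * (-(1:ℝ)/2) * (1 + v^2*s^2) ^ (-(1:ℝ)/2 - 1)) s :=
    h1.rpow_const (Or.inl (ne_of_gt hu))
  have h3 := ((hasDerivAt_id s).mul h2)
  have key : (1 + v^2*s^2) ^ (-(1:ℝ)/2) = (1 + v^2*s^2) * (1 + v^2*s^2) ^ (-(3:ℝ)/2) := by
    rw [show (-(1:ℝ)/2) = 1 + (-(3:ℝ)/2) by norm_num, Real.rpow_add hu, Real.rpow_one]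
  have key2 : (1 + v^2*s^2) ^ (-(1:ℝ)/2 - 1) = (1 + v^2*s^2) ^ (-(3:ℝ)/2) := by
    norm_num
  refine HasDerivAt.congr_deriv h3 ?_
  rw [key, key2, kd]
  simp only [id_eq]
  ring

lemma kk_lip (v : ℝ) (s₁ s₂ : ℝ) : |kk s₂ v - kk s₁ v| ≤ |s₂ - s₁| := by
  have := Convex.norm_image_sub_le_of_norm_hasDerivWithin_le
    (f := fun s => kk s v) (f' := fun s => kd s v) (s := Set.univ) (C := 1)
    (fun x _ => (hasDerivAt_kk v x).hasDerivWithinAt)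
    (fun x _ => by rw [Real.norm_eq_abs, abs_of_pos kd_pos]; exact kd_le_one)
    convex_univ (Set.mem_univ s₁) (Set.mem_univ s₂)
  simpa [Real.norm_eq_abs] using this

lemma intInt (hq : 1 ≤ q) (hx : 1 < x) {m : ℝ → ℝ} (hm : Measurable m)
    (hb : ∀ v ∈ Set.Ioc (1:ℝ) x, |m v| ≤ 1) :
    IntervalIntegrable (fun v => gg q v * m v) volume 1 x := by
  have hbase : IntervalIntegrable (fun v : ℝ => (v-1) ^ (-(1:ℝ)/2)) volume 1 x := by
    have h0 : IntervalIntegrable (fun t : ℝ => t ^ (-(1:ℝ)/2)) volume 0 (x-1) :=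
      intervalIntegral.intervalIntegrable_rpow' (by norm_num)
    simpa using h0.comp_sub_right 1
  apply hbase.mono_fun ((gg_meas.mul hm).aestronglyMeasurable)
  refine (ae_restrict_iff' measurableSet_uIoc).2 (Filter.Eventually.of_forall ?_)
  intro v hv
  rw [Set.uIoc_of_le hx.le] at hv
  have hv1 : 1 < v := hv.1
  show ‖gg q v * m v‖ ≤ ‖(v-1) ^ (-(1:ℝ)/2)‖
  rw [Real.norm_eq_abs, Real.norm_eq_abs, abs_mul,
    abs_of_nonneg (gg_nonneg hq hv1.le), abs_of_nonneg (Real.rpow_nonneg (by linarith) _)]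
  calc gg q v * |m v| ≤ gg q v * 1 := by
        exact mul_le_mul_of_nonneg_left (hb v hv) (gg_nonneg hq hv1.le)
    _ = gg q v := mul_one _
    _ ≤ (v-1) ^ (-(1:ℝ)/2) := gg_le hq hv1

lemma intInt_g (hq : 1 ≤ q) (hx : 1 < x) : IntervalIntegrable (gg q) volume 1 x := by
  have := intInt (m := fun _ => 1) hq hx measurable_const (by intro v _; simp)
  simpa using this

lemma bound0_int (hq : 1 ≤ q) :
    MeasureTheory.IntegrableOn (fun v => gg q v * v⁻¹) (Set.Ioi (1:ℝ)) volume := by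
  rw [← Set.Ioc_union_Ioi_eq_Ioi (le_of_lt one_lt_two)]
  apply MeasureTheory.IntegrableOn.union
  · have h2 : IntervalIntegrable (fun v => gg q v * v⁻¹) volume 1 2 := by
      apply intInt hq one_lt_two (by fun_prop)
      intro v hv
      have : (0:ℝ) ≤ v⁻¹ := inv_nonneg.2 (by linarith [hv.1])
      rw [abs_of_nonneg this, inv_le_one_iff₀]; right; exact hv.1.le
    exact (intervalIntegrable_iff_integrableOn_Ioc_of_le one_le_two).1 h2
  · have hint : MeasureTheory.IntegrableOn (fun v : ℝ => (2:ℝ)^((1:ℝ)/2) * v ^ (-(2:ℝ)))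
        (Set.Ioi (2:ℝ)) volume :=
      (integrableOn_Ioi_rpow_of_lt (by norm_num) two_pos).const_mul _
    apply hint.integrable.mono ((gg_meas.mul (by fun_prop)).aestronglyMeasurable)
    refine (ae_restrict_iff' measurableSet_Ioi).2 (Filter.Eventually.of_forall ?_)
    intro v hv
    have hv2 : (2:ℝ) < v := hv
    have hv1 : (1:ℝ) < v := by linarith
    have hv0 : (0:ℝ) < v := by linarith
    have hgg : gg q v ≤ (2:ℝ)^((1:ℝ)/2) * v⁻¹ := by
      have hsq : v ^ (2:ℕ) ≤ v ^ (2*q) := by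
        rw [← Real.rpow_natCast v 2]
        exact Real.rpow_le_rpow_of_exponent_le hv1.le (by push_cast; linarith)
      have hlow : 0 < v^2/2 := by positivity
      have h1 : gg q v ≤ (v^2/2) ^ (-(1:ℝ)/2) := by
        apply Real.rpow_le_rpow_of_nonpos hlow ?_ (by norm_num)
        nlinarith [hsq, sq_nonneg (v-2)]
      have h2 : (v^2/2) ^ (-(1:ℝ)/2) = (2:ℝ)^((1:ℝ)/2) * v⁻¹ := by
        rw [Real.div_rpow (by positivity) (by norm_num : (0:ℝ) ≤ 2), rpow_sq_inv hv0,
          show (-(1:ℝ)/2) = -((1:ℝ)/2) from by norm_num,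
          Real.rpow_neg (by norm_num : (0:ℝ) ≤ 2)]
        rw [div_eq_mul_inv, inv_inv, mul_comm]
      linarith [h1, h2.le]
    rw [Real.norm_eq_abs, Real.norm_eq_abs, Pi.mul_apply, abs_mul,
      abs_of_nonneg (gg_nonneg hq hv1.le), abs_of_nonneg (by positivity : (0:ℝ) ≤ v⁻¹)]
    have : gg q v * v⁻¹ ≤ ((2:ℝ)^((1:ℝ)/2) * v⁻¹) * v⁻¹ := by
      exact mul_le_mul_of_nonneg_right hgg (by positivity)
    calc gg q v * v⁻¹ ≤ (2:ℝ)^((1:ℝ)/2) * v⁻¹ * v⁻¹ := this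
      _ = (2:ℝ)^((1:ℝ)/2) * (v⁻¹*v⁻¹) := by ring
      _ = (2:ℝ)^((1:ℝ)/2) * v ^ (-(2:ℝ)) := by
          rw [show (-(2:ℝ)) = -((2:ℕ):ℝ) by norm_num, Real.rpow_neg hv0.le, Real.rpow_natCast]
          norm_num
          ring
      _ ≤ |(2:ℝ)^((1:ℝ)/2) * v ^ (-(2:ℝ))| := le_abs_self _


lemma XX_gt_one (hρ : 0 < ρ) (ha : a ∈ Set.Ioo 0 ρ) : 1 < XX ρ a := by
  have hsa : 0 < Real.sinh a := Real.sinh_pos_iff.2 ha.1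
  exact (one_lt_div hsa).2 (Real.sinh_lt_sinh.2 ha.2)

lemma XX_lt_XX (hρ : 0 < ρ) {a₁ a₂ : ℝ} (h1 : 0 < a₁) (h12 : a₁ < a₂) :
    XX ρ a₂ < XX ρ a₁ :=
  div_lt_div_of_pos_left (Real.sinh_pos_iff.2 hρ) (Real.sinh_pos_iff.2 h1)
    (Real.sinh_lt_sinh.2 h12)

lemma XX_le_XX (hρ : 0 < ρ) {a₁ a₂ : ℝ} (h1 : 0 < a₁) (h12 : a₁ ≤ a₂) :
    XX ρ a₂ ≤ XX ρ a₁ := by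
  rcases eq_or_lt_of_le h12 with h | h
  · rw [h]
  · exact (XX_lt_XX hρ h1 h).le

lemma XX_contAt (ha : a ≠ 0) : ContinuousAt (XX ρ) a := by
  apply ContinuousAt.div continuousAt_const Real.continuous_sinh.continuousAt
  simp [Real.sinh_eq_zero, ha]

lemma kk_meas : Measurable (fun v => kk s v) := by unfold kk; fun_prop

lemma kk_sinh_contAt (v a₀ : ℝ) : ContinuousAt (fun a => kk (Real.sinh a) v) a₀ :=
  (hasDerivAt_kk v (Real.sinh a₀)).continuousAt.comp Real.continuous_sinh.continuousAt

lemma catLam_eq : catLam q a ρ = ∫ v in (1:ℝ)..XX ρ a, gg q v * kk (Real.sinh a) v := by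
  unfold catLam XX gg kk
  exact intervalIntegral.integral_congr fun v _ => by ring

noncomputable def FF (q ρ a : ℝ) : ℝ → ℝ :=
  (Set.Ioo (1:ℝ) (XX ρ a)).indicator (fun v => gg q v * kk (Real.sinh a) v)

lemma FF_meas : Measurable (FF q ρ a) :=
  Measurable.indicator (gg_meas.mul kk_meas) measurableSet_Ioo

lemma catLam_rep (hρ : 0 < ρ) (ha : a ∈ Set.Ioo 0 ρ) :
    catLam q a ρ = ∫ v, FF q ρ a v := by
  rw [FF, MeasureTheory.integral_indicator measurableSet_Ioo,
    ← MeasureTheory.integral_Ioc_eq_integral_Ioo,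
    ← intervalIntegral.integral_of_le (XX_gt_one hρ ha).le]
  exact catLam_eq

lemma bound_nonneg (hq : 1 ≤ q) {x : ℝ} (v : ℝ) :
    0 ≤ Set.indicator (Set.Ioo 1 x) (gg q) v :=
  Set.indicator_nonneg (fun w hw => gg_nonneg hq hw.1.le) v

lemma FF_le (hq : 1 ≤ q) (hρ : 0 < ρ) {α : ℝ} (hα : 0 < α) (hαa : α ≤ a) (v : ℝ) :
    |FF q ρ a v| ≤ Set.indicator (Set.Ioo 1 (XX ρ α)) (gg q) v := by
  by_cases hv : v ∈ Set.Ioo 1 (XX ρ a)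
  · rw [FF, Set.indicator_of_mem hv]
    have h0a : 0 < a := lt_of_lt_of_le hα hαa
    have hs : 0 < Real.sinh a := Real.sinh_pos_iff.2 h0a
    have hv' : v ∈ Set.Ioo 1 (XX ρ α) := ⟨hv.1, lt_of_lt_of_le hv.2 (XX_le_XX hρ hα hαa)⟩
    rw [Set.indicator_of_mem hv',
      abs_of_nonneg (mul_nonneg (gg_nonneg hq hv.1.le) (kk_pos hs).le)]
    calc gg q v * kk (Real.sinh a) v ≤ gg q v * 1 :=
          mul_le_mul_of_nonneg_left (kk_le_one hs hv.1.le) (gg_nonneg hq hv.1.le)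
      _ = gg q v := mul_one _
  · rw [FF, Set.indicator_of_notMem hv, abs_zero]
    exact bound_nonneg hq v

lemma FF_le_inv (hq : 1 ≤ q) (h0a : 0 < a) (v : ℝ) :
    |FF q ρ a v| ≤ Set.indicator (Set.Ioi 1) (fun v => gg q v * v⁻¹) v := by
  by_cases hv : v ∈ Set.Ioo 1 (XX ρ a)
  · rw [FF, Set.indicator_of_mem hv, Set.indicator_of_mem (Set.mem_Ioi.2 hv.1)]
    have hs : 0 < Real.sinh a := Real.sinh_pos_iff.2 h0a
    rw [abs_of_nonneg (mul_nonneg (gg_nonneg hq hv.1.le) (kk_pos hs).le)]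
    exact mul_le_mul_of_nonneg_left (kk_le_inv hs hv.1.le) (gg_nonneg hq hv.1.le)
  · rw [FF, Set.indicator_of_notMem hv, abs_zero]
    apply Set.indicator_nonneg
    intro w hw
    have : (1:ℝ) < w := hw
    exact mul_nonneg (gg_nonneg hq this.le) (by positivity)

lemma bound_int (hq : 1 ≤ q) (hρ : 0 < ρ) {α : ℝ} (hα : α ∈ Set.Ioo 0 ρ) :
    MeasureTheory.Integrable (Set.indicator (Set.Ioo 1 (XX ρ α)) (gg q)) := by
  rw [MeasureTheory.integrable_indicator_iff measurableSet_Ioo]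
  have hX := XX_gt_one hρ hα
  exact ((intervalIntegrable_iff_integrableOn_Ioc_of_le hX.le).1
    (intInt_g hq hX)).mono_set Set.Ioo_subset_Ioc_self

lemma catLam_pos (hq : 1 ≤ q) (hρ : 0 < ρ) (ha : a ∈ Set.Ioo 0 ρ) : 0 < catLam q a ρ := by
  rw [catLam_eq]
  have hX := XX_gt_one hρ ha
  have hs : 0 < Real.sinh a := Real.sinh_pos_iff.2 ha.1
  apply intervalIntegral.intervalIntegral_pos_of_pos_on ?_ ?_ hX
  · refine intInt hq hX kk_meas ?_
    intro v hv
    rw [abs_of_pos (kk_pos hs)]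
    exact kk_le_one hs hv.1.le
  · intro v hv
    exact mul_pos (gg_pos hq hv.1) (kk_pos hs)

lemma ae_ne (c : ℝ) : ∀ᵐ (v:ℝ), v ≠ c := by
  have h : {v : ℝ | ¬ v ≠ c} = {c} := by ext v; simp
  rw [MeasureTheory.ae_iff, h]
  exact MeasureTheory.measure_singleton c

lemma catLam_contOn (hq : 1 ≤ q) (hρ : 0 < ρ) :
    ContinuousOn (fun a => catLam q a ρ) (Set.Ioo 0 ρ) := by
  intro a₀ ha₀
  apply ContinuousAt.continuousWithinAt
  have hα : a₀/2 ∈ Set.Ioo 0 ρ :=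
    Set.mem_Ioo.2 ⟨by linarith [ha₀.1], by linarith [ha₀.1, ha₀.2]⟩
  have hnb : Set.Ioo (a₀/2) ρ ∈ nhds a₀ :=
    isOpen_Ioo.mem_nhds (Set.mem_Ioo.2 ⟨by linarith [ha₀.1], ha₀.2⟩)
  have heq : (fun a => catLam q a ρ) =ᶠ[nhds a₀] fun a => ∫ v, FF q ρ a v := by
    filter_upwards [hnb] with a ha
    exact catLam_rep hρ ⟨lt_trans hα.1 ha.1, ha.2⟩
  rw [continuousAt_congr heq]
  apply MeasureTheory.continuousAt_of_dominated
    (bound := Set.indicator (Set.Ioo 1 (XX ρ (a₀/2))) (gg q))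
  · exact Filter.Eventually.of_forall (fun a => FF_meas.aestronglyMeasurable)
  · filter_upwards [hnb] with a ha
    refine Filter.Eventually.of_forall (fun v => ?_)
    rw [Real.norm_eq_abs]
    exact FF_le hq hρ hα.1 ha.1.le v
  · exact bound_int hq hρ hα
  · filter_upwards [ae_ne (XX ρ a₀)] with v hv
    by_cases h1 : 1 < v ∧ v < XX ρ a₀
    · have hXc : ContinuousAt (XX ρ) a₀ := XX_contAt (ne_of_gt ha₀.1)
      have hev : ∀ᶠ a in nhds a₀, v < XX ρ a := hXc.eventually (eventually_gt_nhds h1.2)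
      have heq2 : (fun a => FF q ρ a v) =ᶠ[nhds a₀]
          fun a => gg q v * kk (Real.sinh a) v := by
        filter_upwards [hev] with a haa
        exact Set.indicator_of_mem (Set.mem_Ioo.2 ⟨h1.1, haa⟩) _
      rw [continuousAt_congr heq2]
      exact continuousAt_const.mul (kk_sinh_contAt v a₀)
    · push_neg at h1
      apply Filter.EventuallyEq.continuousAt (y := 0)
      by_cases hv1 : 1 < v
      · have hlt : XX ρ a₀ < v := lt_of_le_of_ne (h1 hv1) (Ne.symm hv)
        have hXc : ContinuousAt (XX ρ) a₀ := XX_contAt (ne_of_gt ha₀.1)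
        have hev : ∀ᶠ a in nhds a₀, XX ρ a < v := hXc.eventually (eventually_lt_nhds hlt)
        filter_upwards [hev] with a haa
        exact Set.indicator_of_notMem (fun hmem => absurd hmem.2 (not_lt.2 haa.le)) _
      · apply Filter.Eventually.of_forall
        intro a
        exact Set.indicator_of_notMem (fun hmem => hv1 hmem.1) _


lemma catLam_tendsto_zero_left (hq : 1 ≤ q) (hρ : 0 < ρ) :
    Tendsto (fun a => catLam q a ρ) (nhdsWithin 0 (Set.Ioi 0)) (nhds 0) := by
  have hrep : (fun a => catLam q a ρ) =ᶠ[nhdsWithin 0 (Set.Ioi 0)]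
      fun a => ∫ v, FF q ρ a v := by
    filter_upwards [Ioo_mem_nhdsGT_of_mem (Set.left_mem_Ico.2 hρ)] with a ha
    exact catLam_rep hρ ha
  rw [tendsto_congr' hrep]
  have hmain := MeasureTheory.tendsto_integral_filter_of_dominated_convergence
    (μ := volume) (l := nhdsWithin (0:ℝ) (Set.Ioi 0)) (F := fun a v => FF q ρ a v)
    (f := fun _ => (0:ℝ))
    (Set.indicator (Set.Ioi 1) (fun v => gg q v * v⁻¹))
    (Filter.Eventually.of_forall (fun a => FF_meas.aestronglyMeasurable))
    ?_ ?_ ?_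
  · simpa using hmain
  · filter_upwards [self_mem_nhdsWithin] with a ha
    refine Filter.Eventually.of_forall (fun v => ?_)
    rw [Real.norm_eq_abs]
    exact FF_le_inv hq ha v
  · rw [MeasureTheory.integrable_indicator_iff measurableSet_Ioi]
    exact bound0_int hq
  · refine Filter.Eventually.of_forall (fun v => ?_)
    by_cases hv1 : 1 < v
    · have hS : 0 < Real.sinh ρ := Real.sinh_pos_iff.2 hρ
      have hv0 : 0 < v := lt_trans one_pos hv1
      have hc : Tendsto (fun a => Real.sinh a) (nhdsWithin (0:ℝ) (Set.Ioi 0)) (nhds 0) := by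
        have h := Real.continuous_sinh.tendsto 0
        rw [Real.sinh_zero] at h
        exact h.mono_left nhdsWithin_le_nhds
      have hev : ∀ᶠ a in nhdsWithin (0:ℝ) (Set.Ioi 0),
          Real.sinh a < Real.sinh ρ / v :=
        hc.eventually (eventually_lt_nhds (by positivity))
      have hev2 : ∀ᶠ a in nhdsWithin (0:ℝ) (Set.Ioi 0), v < XX ρ a := by
        filter_upwards [hev, self_mem_nhdsWithin] with a h1 h2
        have hsa : 0 < Real.sinh a := Real.sinh_pos_iff.2 h2
        rw [XX, lt_div_iff₀ hsa]
        calc v * Real.sinh a < (Real.sinh ρ / v) * v := by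
              rw [mul_comm]; exact mul_lt_mul_of_pos_right h1 hv0
          _ = Real.sinh ρ := div_mul_cancel₀ _ (ne_of_gt hv0)
      have heq : (fun a => FF q ρ a v) =ᶠ[nhdsWithin (0:ℝ) (Set.Ioi 0)]
          fun a => gg q v * kk (Real.sinh a) v := by
        filter_upwards [hev2] with a haa
        exact Set.indicator_of_mem (Set.mem_Ioo.2 ⟨hv1, haa⟩) _
      rw [tendsto_congr' heq]
      have hT : Tendsto (fun a => gg q v * kk (Real.sinh a) v) (nhds (0:ℝ))
          (nhds (gg q v * kk (Real.sinh 0) v)) :=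
        continuousAt_const.mul (kk_sinh_contAt v 0)
      have h00 : gg q v * kk (Real.sinh 0) v = 0 := by simp [kk, Real.sinh_zero]
      rw [h00] at hT
      exact hT.mono_left nhdsWithin_le_nhds
    · have hz : ∀ a, FF q ρ a v = 0 := fun a =>
        Set.indicator_of_notMem (fun h => hv1 h.1) _
      simpa [hz] using (tendsto_const_nhds :
        Tendsto (fun _ : ℝ => (0:ℝ)) (nhdsWithin (0:ℝ) (Set.Ioi 0)) (nhds 0))

lemma catLam_tendsto_zero_right (hq : 1 ≤ q) (hρ : 0 < ρ) :
    Tendsto (fun a => catLam q a ρ) (nhdsWithin ρ (Set.Iio ρ)) (nhds 0) := by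
  have hhalf : ρ/2 ∈ Set.Ioo 0 ρ := Set.mem_Ioo.2 ⟨by linarith, by linarith⟩
  have hrep : (fun a => catLam q a ρ) =ᶠ[nhdsWithin ρ (Set.Iio ρ)]
      fun a => ∫ v, FF q ρ a v := by
    filter_upwards [Ioo_mem_nhdsLT_of_mem (a := ρ/2) (c := ρ)
      (Set.mem_Ioc.2 ⟨by linarith, le_refl ρ⟩)] with a ha
    exact catLam_rep hρ ⟨lt_trans hhalf.1 ha.1, ha.2⟩
  rw [tendsto_congr' hrep]
  have hmain := MeasureTheory.tendsto_integral_filter_of_dominated_convergence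
    (μ := volume) (l := nhdsWithin ρ (Set.Iio ρ)) (F := fun a v => FF q ρ a v)
    (f := fun _ => (0:ℝ))
    (Set.indicator (Set.Ioo 1 (XX ρ (ρ/2))) (gg q))
    (Filter.Eventually.of_forall (fun a => FF_meas.aestronglyMeasurable))
    ?_ ?_ ?_
  · simpa using hmain
  · filter_upwards [Ioo_mem_nhdsLT_of_mem (a := ρ/2) (c := ρ)
      (Set.mem_Ioc.2 ⟨by linarith, le_refl ρ⟩)] with a ha
    refine Filter.Eventually.of_forall (fun v => ?_)
    rw [Real.norm_eq_abs]
    exact FF_le hq hρ hhalf.1 ha.1.le v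
  · exact bound_int hq hρ hhalf
  · refine Filter.Eventually.of_forall (fun v => ?_)
    by_cases hv1 : 1 < v
    · have hXc : Tendsto (XX ρ) (nhds ρ) (nhds (XX ρ ρ)) := XX_contAt (ne_of_gt hρ)
      have hXρ : XX ρ ρ = 1 := div_self (ne_of_gt (Real.sinh_pos_iff.2 hρ))
      rw [hXρ] at hXc
      have hev : ∀ᶠ a in nhds ρ, XX ρ a < v := hXc.eventually (eventually_lt_nhds hv1)
      have heq : (fun a => FF q ρ a v) =ᶠ[nhdsWithin ρ (Set.Iio ρ)] fun _ => (0:ℝ) := by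
        filter_upwards [hev.filter_mono nhdsWithin_le_nhds] with a haa
        exact Set.indicator_of_notMem (fun hmem => absurd hmem.2 (not_lt.2 haa.le)) _
      rw [tendsto_congr' heq]
      exact tendsto_const_nhds
    · have hz : ∀ a, FF q ρ a v = 0 := fun a =>
        Set.indicator_of_notMem (fun h => hv1 h.1) _
      simpa [hz] using (tendsto_const_nhds :
        Tendsto (fun _ : ℝ => (0:ℝ)) (nhdsWithin ρ (Set.Iio ρ)) (nhds 0))

set_option maxHeartbeats 1000000 in
lemma exists_max (hq : 1 ≤ q) (hρ : 0 < ρ) :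
    ∃ a ∈ Set.Ioo (0:ℝ) ρ, ∀ b ∈ Set.Ioo (0:ℝ) ρ, catLam q b ρ ≤ catLam q a ρ := by
  have hhalf : ρ/2 ∈ Set.Ioo 0 ρ := Set.mem_Ioo.2 ⟨by linarith, by linarith⟩
  set m := catLam q (ρ/2) ρ with hm
  have hm0 : 0 < m := catLam_pos hq hρ hhalf
  have h0 : ∀ᶠ a in nhdsWithin (0:ℝ) (Set.Ioi 0), catLam q a ρ < m :=
    (catLam_tendsto_zero_left hq hρ).eventually (eventually_lt_nhds hm0)
  have hρ' : ∀ᶠ a in nhdsWithin ρ (Set.Iio ρ), catLam q a ρ < m :=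
    (catLam_tendsto_zero_right hq hρ).eventually (eventually_lt_nhds hm0)
  obtain ⟨u, hu, husub⟩ := mem_nhdsGT_iff_exists_Ioo_subset.1 h0
  obtain ⟨w, hw, hwsub⟩ := mem_nhdsLT_iff_exists_Ioo_subset.1 hρ'
  set α := min (u/2) (ρ/2) with hα
  set β := max w (ρ/2) with hβ
  have hu0 : (0:ℝ) < u := hu
  have hwρ : w < ρ := hw
  have hα0 : 0 < α := lt_min (by linarith) (by linarith)
  have hαhalf : α ≤ ρ/2 := min_le_right _ _
  have hhalfβ : ρ/2 ≤ β := le_max_right _ _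
  have hβρ : β < ρ := max_lt hwρ (by linarith)
  have hIcc : Set.Icc α β ⊆ Set.Ioo 0 ρ := fun x hx =>
    Set.mem_Ioo.2 ⟨lt_of_lt_of_le hα0 hx.1, lt_of_le_of_lt hx.2 hβρ⟩
  obtain ⟨a, haI, hmax⟩ := isCompact_Icc.exists_isMaxOn (Set.nonempty_Icc.2 (le_trans hαhalf hhalfβ))
    ((catLam_contOn hq hρ).mono hIcc)
  refine ⟨a, hIcc haI, fun b hb => ?_⟩
  by_cases hbI : b ∈ Set.Icc α β
  · exact hmax hbI
  · have hma : m ≤ catLam q a ρ := hmax (Set.mem_Icc.2 ⟨hαhalf, hhalfβ⟩)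
    rw [Set.mem_Icc, not_and_or] at hbI
    rcases hbI with hbα | hbβ
    · push_neg at hbα
      have : b ∈ Set.Ioo 0 u := Set.mem_Ioo.2 ⟨hb.1, by
        have : α ≤ u/2 := min_le_left _ _
        linarith⟩
      exact le_of_lt (lt_of_lt_of_le (husub this) hma)
    · push_neg at hbβ
      have : b ∈ Set.Ioo w ρ := Set.mem_Ioo.2 ⟨by
        have : w ≤ β := le_max_left _ _
        linarith, hb.2⟩
      exact le_of_lt (lt_of_lt_of_le (hwsub this) hma)


lemma kd_meas : Measurable (fun v => kd s v) := by unfold kd; fun_prop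

lemma kk_contV : Continuous (fun v : ℝ => kk s v) := by
  rw [continuous_iff_continuousAt]
  intro v
  exact continuousAt_const.mul
    (((by fun_prop : Continuous (fun v : ℝ => 1 + v^2*s^2)).continuousAt).rpow_const
      (Or.inl (ne_of_gt one_plus_pos)))

lemma intInt_between (hq : 1 ≤ q) {x y : ℝ} (hx : 1 < x) (hy : 1 < y) {m : ℝ → ℝ}
    (hm : Continuous m) :
    IntervalIntegrable (fun v => gg q v * m v) volume x y := by
  apply ContinuousOn.intervalIntegrable
  apply ContinuousOn.mul ((gg_contOn hq).mono ?_) hm.continuousOn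
  intro v hv
  have h1 : min x y ≤ v := hv.1
  have h2 : 1 < min x y := lt_min hx hy
  show (1:ℝ) < v
  linarith

lemma kd_contV : Continuous (fun v : ℝ => kd s v) := by
  rw [continuous_iff_continuousAt]
  intro v
  exact ((by fun_prop : Continuous (fun v : ℝ => 1 + v^2*s^2)).continuousAt).rpow_const
    (Or.inl (ne_of_gt one_plus_pos))

lemma integrand_contAt (hq : 1 ≤ q) (hv : 1 < v) :
    ContinuousAt (fun v => gg q v * kk s v) v :=
  (gg_contAt hq hv).mul kk_contV.continuousAt

noncomputable def PP (q ρ a₀ a : ℝ) : ℝ := ∫ v in (1:ℝ)..XX ρ a₀, gg q v * kk (Real.sinh a) v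
noncomputable def QR (q ρ a₀ x : ℝ) : ℝ := ∫ v in XX ρ a₀..x, gg q v * kk (Real.sinh a₀) v
noncomputable def EE (q ρ a₀ a : ℝ) : ℝ :=
  ∫ v in XX ρ a₀..XX ρ a, gg q v * (kk (Real.sinh a) v - kk (Real.sinh a₀) v)

lemma hasDerivAt_XX (ha : a ≠ 0) :
    HasDerivAt (XX ρ) (-(Real.sinh ρ * Real.cosh a) / Real.sinh a ^ 2) a := by
  have hs : Real.sinh a ≠ 0 := by simp [Real.sinh_eq_zero, ha]
  have h := (hasDerivAt_const a (Real.sinh ρ)).div (Real.hasDerivAt_sinh a) hs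
  refine HasDerivAt.congr_deriv h ?_
  ring

lemma hasDerivAt_PP {a₀ : ℝ} (hq : 1 ≤ q) (hρ : 0 < ρ) (ha₀ : a₀ ∈ Set.Ioo 0 ρ) :
    HasDerivAt (fun a => PP q ρ a₀ a) (Real.cosh a₀ * AA q ρ a₀) a₀ := by
  have hX := XX_gt_one hρ ha₀
  have hs₀ : 0 < Real.sinh a₀ := Real.sinh_pos_iff.2 ha₀.1
  have hmain := intervalIntegral.hasDerivAt_integral_of_dominated_loc_of_deriv_le
    (𝕜 := ℝ) (μ := volume) (a := 1) (b := XX ρ a₀) (s := Metric.ball a₀ 1)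
    (F := fun a v => gg q v * kk (Real.sinh a) v)
    (F' := fun a v => gg q v * (kd (Real.sinh a) v * Real.cosh a))
    (x₀ := a₀) (bound := fun v => gg q v * Real.cosh (|a₀| + 1))
    (Metric.ball_mem_nhds a₀ one_pos)
    (Filter.Eventually.of_forall (fun a => (gg_meas.mul kk_meas).aestronglyMeasurable))
    ?_ ((gg_meas.mul (kd_meas.mul measurable_const)).aestronglyMeasurable)
    ?_ ?_ ?_
  · obtain ⟨-, hD⟩ := hmain
    have heq : (fun v => gg q v * (kd (Real.sinh a₀) v * Real.cosh a₀))
        = fun v => Real.cosh a₀ * (gg q v * kd (Real.sinh a₀) v) := by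
      funext v; ring
    rw [heq, intervalIntegral.integral_const_mul] at hD
    exact hD
  · refine intInt hq hX kk_meas ?_
    intro v hv
    rw [abs_of_pos (kk_pos hs₀)]
    exact kk_le_one hs₀ hv.1.le
  · refine Filter.Eventually.of_forall (fun t => ?_)
    intro ht x hx
    rw [Set.uIoc_of_le hX.le] at ht
    have ht1 : (1:ℝ) < t := ht.1
    have hggnn : 0 ≤ gg q t := gg_nonneg hq ht1.le
    have hcx : Real.cosh x ≤ Real.cosh (|a₀| + 1) := by
      rw [Real.cosh_le_cosh, abs_of_nonneg (by positivity : (0:ℝ) ≤ |a₀| + 1)]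
      rw [Metric.mem_ball, Real.dist_eq] at hx
      calc |x| = |(x - a₀) + a₀| := by ring_nf
        _ ≤ |x - a₀| + |a₀| := abs_add_le _ _
        _ ≤ |a₀| + 1 := by linarith
    rw [Real.norm_eq_abs, abs_mul, abs_of_nonneg hggnn, abs_of_nonneg
      (mul_nonneg kd_pos.le (Real.cosh_pos x).le)]
    apply mul_le_mul_of_nonneg_left ?_ hggnn
    calc kd (Real.sinh x) t * Real.cosh x ≤ 1 * Real.cosh (|a₀| + 1) :=
          mul_le_mul kd_le_one hcx (Real.cosh_pos x).le one_pos.le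
      _ = Real.cosh (|a₀| + 1) := one_mul _
  · exact (intInt_g hq hX).mul_const _
  · refine Filter.Eventually.of_forall (fun t => ?_)
    intro ht x hx
    exact ((hasDerivAt_kk t (Real.sinh x)).comp x (Real.hasDerivAt_sinh x)).const_mul (gg q t)

lemma hasDerivAt_QR {a₀ : ℝ} (hq : 1 ≤ q) (hρ : 0 < ρ) (ha₀ : a₀ ∈ Set.Ioo 0 ρ) :
    HasDerivAt (fun x => QR q ρ a₀ x)
      (gg q (XX ρ a₀) * kk (Real.sinh a₀) (XX ρ a₀)) (XX ρ a₀) := by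
  have hX := XX_gt_one hρ ha₀
  have hopen : IsOpen {v : ℝ | 1 < v} := isOpen_lt continuous_const continuous_id
  apply intervalIntegral.integral_hasDerivAt_right
  · exact intInt_between hq hX hX kk_contV
  · exact ContinuousOn.stronglyMeasurableAtFilter hopen
      ((gg_contOn hq).mul kk_contV.continuousOn) _ hX
  · exact integrand_contAt hq hX

lemma hasDerivAt_EE {a₀ : ℝ} (hq : 1 ≤ q) (hρ : 0 < ρ) (ha₀ : a₀ ∈ Set.Ioo 0 ρ) :
    HasDerivAt (fun a => EE q ρ a₀ a) 0 a₀ := by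
  have hX : 1 < XX ρ a₀ := XX_gt_one hρ ha₀
  set X₀ := XX ρ a₀ with hX₀def
  set d : ℝ := (X₀ - 1)/2 with hddef
  have hd0 : 0 < d := by rw [hddef]; linarith
  set M : ℝ := ((X₀ - 1)/2) ^ (-(1:ℝ)/2) with hMdef
  have hM0 : 0 ≤ M := Real.rpow_nonneg (by linarith) _
  have hXc : ContinuousAt (XX ρ) a₀ := XX_contAt (ne_of_gt ha₀.1)
  have hev1 : ∀ᶠ a in nhds a₀, X₀ - d < XX ρ a := hXc.eventually (eventually_gt_nhds (by linarith))
  have hbound : ∀ᶠ a in nhds a₀,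
      ‖EE q ρ a₀ a‖ ≤ M * |Real.sinh a - Real.sinh a₀| * |XX ρ a - X₀| := by
    filter_upwards [hev1] with a h1
    apply intervalIntegral.norm_integral_le_of_norm_le_const
    intro v hv
    have hvlb : X₀ - d < v := by
      have := hv.1
      have hmin : X₀ - d < min X₀ (XX ρ a) := lt_min (by linarith) h1
      calc X₀ - d < min X₀ (XX ρ a) := hmin
        _ < v := this
    have hv1 : (1:ℝ) < v := by
      have : X₀ - d = (X₀ + 1)/2 := by rw [hddef]; ring
      rw [this] at hvlb; linarith
    rw [Real.norm_eq_abs, abs_mul, abs_of_nonneg (gg_nonneg hq hv1.le)]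
    apply mul_le_mul ?_ (kk_lip v _ _) (abs_nonneg _) hM0
    calc gg q v ≤ (v - 1) ^ (-(1:ℝ)/2) := gg_le hq hv1
      _ ≤ M := by
          rw [hMdef]
          apply Real.rpow_le_rpow_of_nonpos (by linarith) ?_ (by norm_num)
          have : X₀ - d = (X₀ + 1)/2 := by rw [hddef]; ring
          rw [this] at hvlb
          linarith
  have hXd : HasDerivAt (XX ρ) (-(Real.sinh ρ * Real.cosh a₀) / Real.sinh a₀ ^ 2) a₀ :=
    hasDerivAt_XX (ne_of_gt ha₀.1)
  have hbigO : (fun a => XX ρ a - XX ρ a₀) =O[nhds a₀] fun a => a - a₀ :=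
    hXd.hasFDerivAt.isBigO_sub
  have hlitO : (fun a => M * |Real.sinh a - Real.sinh a₀| * (XX ρ a - XX ρ a₀))
      =o[nhds a₀] fun a => XX ρ a - XX ρ a₀ := by
    rw [Asymptotics.isLittleO_iff]
    intro ε hε
    have hφ : Tendsto (fun a => M * |Real.sinh a - Real.sinh a₀|) (nhds a₀) (nhds 0) := by
      have hc : ContinuousAt (fun a => M * |Real.sinh a - Real.sinh a₀|) a₀ :=
        (continuous_const.mul ((Real.continuous_sinh.sub continuous_const).abs)).continuousAt
      have hval : (fun a => M * |Real.sinh a - Real.sinh a₀|) a₀ = 0 := by simp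
      rw [← hval]
      exact hc
    filter_upwards [hφ.eventually (eventually_le_nhds hε)] with a hφa
    have hφnn : 0 ≤ M * |Real.sinh a - Real.sinh a₀| := mul_nonneg hM0 (abs_nonneg _)
    rw [Real.norm_eq_abs, Real.norm_eq_abs, abs_mul, abs_of_nonneg hφnn]
    exact mul_le_mul_of_nonneg_right hφa (abs_nonneg _)
  have hEO : (fun a => EE q ρ a₀ a) =O[nhds a₀]
      fun a => M * |Real.sinh a - Real.sinh a₀| * (XX ρ a - XX ρ a₀) := by
    apply Asymptotics.IsBigO.of_bound 1
    filter_upwards [hbound] with a ha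
    rw [one_mul, Real.norm_eq_abs (M * |Real.sinh a - Real.sinh a₀| * (XX ρ a - XX ρ a₀)),
      abs_mul, abs_of_nonneg (mul_nonneg hM0 (abs_nonneg _))]
    exact ha
  have final := (hEO.trans_isLittleO hlitO).trans_isBigO hbigO
  rw [hasDerivAt_iff_isLittleO]
  have hEE0 : EE q ρ a₀ a₀ = 0 := intervalIntegral.integral_same
  simpa [hEE0] using final


lemma hasDerivAt_catLam {a₀ : ℝ} (hq : 1 ≤ q) (hρ : 0 < ρ) (ha₀ : a₀ ∈ Set.Ioo 0 ρ) :
    HasDerivAt (fun a => catLam q a ρ)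
      (Real.cosh a₀ * (AA q ρ a₀ - BB q ρ a₀)) a₀ := by
  have hX : 1 < XX ρ a₀ := XX_gt_one hρ ha₀
  have hs₀ : 0 < Real.sinh a₀ := Real.sinh_pos_iff.2 ha₀.1
  have hXc : ContinuousAt (XX ρ) a₀ := XX_contAt (ne_of_gt ha₀.1)
  have hev1 : ∀ᶠ a in nhds a₀, (XX ρ a₀ + 1)/2 < XX ρ a :=
    hXc.eventually (eventually_gt_nhds (by linarith))
  have hev2 : ∀ᶠ a in nhds a₀, a ∈ Set.Ioo 0 ρ := isOpen_Ioo.eventually_mem ha₀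
  have hsum : (fun a => catLam q a ρ) =ᶠ[nhds a₀]
      fun a => PP q ρ a₀ a + (QR q ρ a₀ (XX ρ a) + EE q ρ a₀ a) := by
    filter_upwards [hev1, hev2] with a h1 h2
    rw [catLam_eq]
    have hsa : 0 < Real.sinh a := Real.sinh_pos_iff.2 h2.1
    have hXa : 1 < XX ρ a := by linarith
    have i1 : IntervalIntegrable (fun v => gg q v * kk (Real.sinh a) v) volume 1 (XX ρ a₀) := by
      refine intInt hq hX kk_meas ?_
      intro v hv
      rw [abs_of_pos (kk_pos hsa)]
      exact kk_le_one hsa hv.1.le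
    have i2 : IntervalIntegrable (fun v => gg q v * kk (Real.sinh a) v) volume
        (XX ρ a₀) (XX ρ a) := intInt_between hq hX hXa kk_contV
    rw [← intervalIntegral.integral_add_adjacent_intervals i1 i2]
    congr 1
    have i3 : IntervalIntegrable (fun v => gg q v * kk (Real.sinh a₀) v) volume
        (XX ρ a₀) (XX ρ a) := intInt_between hq hX hXa kk_contV
    have i4 : IntervalIntegrable
        (fun v => gg q v * (kk (Real.sinh a) v - kk (Real.sinh a₀) v)) volume
        (XX ρ a₀) (XX ρ a) := intInt_between hq hX hXa (kk_contV.sub kk_contV)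
    calc (∫ v in XX ρ a₀..XX ρ a, gg q v * kk (Real.sinh a) v)
        = ∫ v in XX ρ a₀..XX ρ a,
            (gg q v * kk (Real.sinh a₀) v
              + gg q v * (kk (Real.sinh a) v - kk (Real.sinh a₀) v)) :=
          intervalIntegral.integral_congr (fun v _ => by ring)
      _ = QR q ρ a₀ (XX ρ a) + EE q ρ a₀ a := intervalIntegral.integral_add i3 i4
  have hXd : HasDerivAt (XX ρ) (-(Real.sinh ρ * Real.cosh a₀) / Real.sinh a₀ ^ 2) a₀ :=
    hasDerivAt_XX (ne_of_gt ha₀.1)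
  have hcomp : HasDerivAt (fun a => QR q ρ a₀ (XX ρ a))
      (gg q (XX ρ a₀) * kk (Real.sinh a₀) (XX ρ a₀)
        * (-(Real.sinh ρ * Real.cosh a₀) / Real.sinh a₀ ^ 2)) a₀ :=
    (hasDerivAt_QR hq hρ ha₀).comp a₀ hXd
  have hd := (hasDerivAt_PP hq hρ ha₀).add (hcomp.add (hasDerivAt_EE hq hρ ha₀))
  have happ := hd.congr_of_eventuallyEq hsum
  refine HasDerivAt.congr_deriv happ ?_
  have hs₀' : Real.sinh a₀ ≠ 0 := ne_of_gt hs₀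
  have hXs : XX ρ a₀ * Real.sinh a₀ = Real.sinh ρ := div_mul_cancel₀ _ hs₀'
  have hsq : 1 + (XX ρ a₀)^2 * (Real.sinh a₀)^2 = 1 + Real.sinh ρ ^ 2 := by
    rw [← hXs]; ring
  have hkk : kk (Real.sinh a₀) (XX ρ a₀)
      = Real.sinh a₀ * (1 + Real.sinh ρ ^ 2) ^ (-(1:ℝ)/2) := by
    rw [kk, hsq]
  rw [hkk, BB]
  have hX₀eq : XX ρ a₀ = Real.sinh ρ / Real.sinh a₀ := rfl
  rw [hX₀eq]
  field_simp
  ring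

lemma AA_lt_AA (hq : 1 ≤ q) (hρ : 0 < ρ) {a₁ a₂ : ℝ} (ha₁ : a₁ ∈ Set.Ioo 0 ρ)
    (ha₂ : a₂ ∈ Set.Ioo 0 ρ) (h12 : a₁ < a₂) : AA q ρ a₂ < AA q ρ a₁ := by
  have hX1 : 1 < XX ρ a₁ := XX_gt_one hρ ha₁
  have hX2 : 1 < XX ρ a₂ := XX_gt_one hρ ha₂
  have hXX : XX ρ a₂ < XX ρ a₁ := XX_lt_XX hρ ha₁.1 h12
  have hs1 : 0 < Real.sinh a₁ := Real.sinh_pos_iff.2 ha₁.1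
  have hs12 : Real.sinh a₁ ≤ Real.sinh a₂ := (Real.sinh_le_sinh.2 h12.le : _)
  have i1 : IntervalIntegrable (fun v => gg q v * kd (Real.sinh a₁) v) volume 1 (XX ρ a₂) := by
    refine intInt hq hX2 kd_meas ?_
    intro v hv
    rw [abs_of_pos kd_pos]
    exact kd_le_one
  have i2 : IntervalIntegrable (fun v => gg q v * kd (Real.sinh a₂) v) volume 1 (XX ρ a₂) := by
    refine intInt hq hX2 kd_meas ?_
    intro v hv
    rw [abs_of_pos kd_pos]
    exact kd_le_one
  have i3 : IntervalIntegrable (fun v => gg q v * kd (Real.sinh a₁) v) volume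
      (XX ρ a₂) (XX ρ a₁) := by
    exact intInt_between hq hX2 hX1 kd_contV
  have hsplit : AA q ρ a₁
      = (∫ v in (1:ℝ)..XX ρ a₂, gg q v * kd (Real.sinh a₁) v)
        + ∫ v in XX ρ a₂..XX ρ a₁, gg q v * kd (Real.sinh a₁) v := by
    rw [AA, intervalIntegral.integral_add_adjacent_intervals i1 i3]
  have hmono : AA q ρ a₂ ≤ ∫ v in (1:ℝ)..XX ρ a₂, gg q v * kd (Real.sinh a₁) v := by
    rw [AA]
    apply intervalIntegral.integral_mono_on hX2.le i2 i1
    intro v hv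
    exact mul_le_mul_of_nonneg_left (kd_anti hs1.le hs12) (gg_nonneg hq hv.1)
  have hpos : 0 < ∫ v in XX ρ a₂..XX ρ a₁, gg q v * kd (Real.sinh a₁) v := by
    apply intervalIntegral.intervalIntegral_pos_of_pos_on i3 ?_ hXX
    intro v hv
    exact mul_pos (gg_pos hq (lt_trans hX2 hv.1)) kd_pos
  linarith

lemma xg_anti (hq : 1 ≤ q) {x₁ x₂ : ℝ} (hx2 : 1 < x₂) (h21 : x₂ < x₁) :
    x₁ * gg q x₁ < x₂ * gg q x₂ := by
  have hx1 : 1 < x₁ := lt_trans hx2 h21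
  have hP1 : 0 < x₁ ^ (2*q) - 1 := hbase hq hx1
  have hP2 : 0 < x₂ ^ (2*q) - 1 := hbase hq hx2
  have hkey : x₁^2 * (x₂ ^ (2*q) - 1) < x₂^2 * (x₁ ^ (2*q) - 1) := by
    have hsplit1 : x₁ ^ (2*q) = x₁^2 * x₁ ^ (2*q - 2) := by
      rw [← Real.rpow_natCast x₁ 2, ← Real.rpow_add (by linarith : (0:ℝ) < x₁)]
      norm_num
    have hsplit2 : x₂ ^ (2*q) = x₂^2 * x₂ ^ (2*q - 2) := by
      rw [← Real.rpow_natCast x₂ 2, ← Real.rpow_add (by linarith : (0:ℝ) < x₂)]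
      norm_num
    have hu : x₂ ^ (2*q - 2) ≤ x₁ ^ (2*q - 2) :=
      Real.rpow_le_rpow (by linarith) h21.le (by linarith)
    have hu0 : 0 < x₂ ^ (2*q - 2) := Real.rpow_pos_of_pos (by linarith) _
    rw [hsplit1, hsplit2]
    nlinarith [mul_nonneg (mul_nonneg (sq_nonneg x₁) (sq_nonneg x₂)) (sub_nonneg.2 hu),
      mul_pos (sub_pos.2 h21) (by linarith : (0:ℝ) < x₁ + x₂)]
  have hgg1 : gg q x₁ = ((x₁ ^ (2*q) - 1) ^ ((1:ℝ)/2))⁻¹ := by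
    rw [gg, show (-(1:ℝ)/2) = -((1:ℝ)/2) by norm_num, Real.rpow_neg hP1.le]
  have hgg2 : gg q x₂ = ((x₂ ^ (2*q) - 1) ^ ((1:ℝ)/2))⁻¹ := by
    rw [gg, show (-(1:ℝ)/2) = -((1:ℝ)/2) by norm_num, Real.rpow_neg hP2.le]
  have hr1 : 0 < (x₁ ^ (2*q) - 1) ^ ((1:ℝ)/2) := Real.rpow_pos_of_pos hP1 _
  have hr2 : 0 < (x₂ ^ (2*q) - 1) ^ ((1:ℝ)/2) := Real.rpow_pos_of_pos hP2 _
  have hhalfsq : ∀ y : ℝ, 0 ≤ y → (y ^ ((1:ℝ)/2))^2 = y := by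
    intro y hy
    rw [← Real.rpow_natCast (y ^ ((1:ℝ)/2)) 2, ← Real.rpow_mul hy]
    norm_num
  have hsqlt : (x₁ * (x₂ ^ (2*q) - 1) ^ ((1:ℝ)/2))^2
      < (x₂ * (x₁ ^ (2*q) - 1) ^ ((1:ℝ)/2))^2 := by
    rw [mul_pow, mul_pow, hhalfsq _ hP1.le, hhalfsq _ hP2.le]
    exact hkey
  have hlt : x₁ * (x₂ ^ (2*q) - 1) ^ ((1:ℝ)/2) < x₂ * (x₁ ^ (2*q) - 1) ^ ((1:ℝ)/2) :=
    lt_of_pow_lt_pow_left₀ 2 (by positivity) hsqlt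
  rw [hgg1, hgg2, ← div_eq_mul_inv, ← div_eq_mul_inv, div_lt_div_iff₀ hr1 hr2]
  exact hlt


lemma BB_lt_BB (hq : 1 ≤ q) (hρ : 0 < ρ) {a₁ a₂ : ℝ} (ha₁ : a₁ ∈ Set.Ioo 0 ρ)
    (ha₂ : a₂ ∈ Set.Ioo 0 ρ) (h12 : a₁ < a₂) : BB q ρ a₁ < BB q ρ a₂ := by
  have hX2 : 1 < XX ρ a₂ := XX_gt_one hρ ha₂
  have hXX : XX ρ a₂ < XX ρ a₁ := XX_lt_XX hρ ha₁.1 h12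
  have hP : 0 < (1 + Real.sinh ρ ^ 2) ^ (-(1:ℝ)/2) :=
    Real.rpow_pos_of_pos (by positivity) _
  have := xg_anti hq hX2 hXX
  rw [BB, BB]
  exact mul_lt_mul_of_pos_right this hP

lemma hh_strictAnti (hq : 1 ≤ q) (hρ : 0 < ρ) {a₁ a₂ : ℝ} (ha₁ : a₁ ∈ Set.Ioo 0 ρ)
    (ha₂ : a₂ ∈ Set.Ioo 0 ρ) (h12 : a₁ < a₂) :
    AA q ρ a₂ - BB q ρ a₂ < AA q ρ a₁ - BB q ρ a₁ := by
  have h1 := AA_lt_AA hq hρ ha₁ ha₂ h12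
  have h2 := BB_lt_BB hq hρ ha₁ ha₂ h12
  linarith

end lemmas

/-- For `q ≥ 1` and fixed `ρ > 0`, the function `γ(a) = λ(a, ρ)` is
positive and continuous on `(0, ρ)`, tends to `0` as `a → 0⁺` and as `a → ρ⁻`, and
attains its maximum over `(0, ρ)` at exactly one point. -/
theorem stmt_15 (q ρ : ℝ) (hq : 1 ≤ q) (hρ : 0 < ρ) :
    (∀ a ∈ Set.Ioo (0 : ℝ) ρ, 0 < catLam q a ρ) ∧
    ContinuousOn (fun a => catLam q a ρ) (Set.Ioo 0 ρ) ∧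
    Filter.Tendsto (fun a => catLam q a ρ) (nhdsWithin 0 (Set.Ioi 0)) (nhds 0) ∧
    Filter.Tendsto (fun a => catLam q a ρ) (nhdsWithin ρ (Set.Iio ρ)) (nhds 0) ∧
    (∃! a : ℝ, a ∈ Set.Ioo (0 : ℝ) ρ ∧ ∀ b ∈ Set.Ioo (0 : ℝ) ρ, catLam q b ρ ≤ catLam q a ρ) := by
  refine ⟨fun a ha => catLam_pos hq hρ ha, catLam_contOn hq hρ,
    catLam_tendsto_zero_left hq hρ, catLam_tendsto_zero_right hq hρ, ?_⟩
  obtain ⟨a, haI, hmax⟩ := exists_max hq hρ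
  refine ⟨a, ⟨haI, hmax⟩, ?_⟩
  rintro b ⟨hbI, hbmax⟩
  have key : ∀ c ∈ Set.Ioo (0:ℝ) ρ,
      (∀ x ∈ Set.Ioo (0:ℝ) ρ, catLam q x ρ ≤ catLam q c ρ) →
      AA q ρ c - BB q ρ c = 0 := by
    intro c hc hcm
    have hloc : IsLocalMax (fun x => catLam q x ρ) c := by
      filter_upwards [isOpen_Ioo.mem_nhds hc] with x hx
      exact hcm x hx
    have hz := hloc.hasDerivAt_eq_zero (hasDerivAt_catLam hq hρ hc)
    have hcosh : Real.cosh c ≠ 0 := ne_of_gt (Real.cosh_pos c)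
    exact (mul_eq_zero.1 hz).resolve_left hcosh
  have hb0 := key b hbI hbmax
  have ha0 := key a haI hmax
  rcases lt_trichotomy b a with h | h | h
  · have := hh_strictAnti hq hρ hbI haI h
    rw [ha0, hb0] at this
    exact absurd this (lt_irrefl 0)
  · exact h
  · have := hh_strictAnti hq hρ haI hbI h
    rw [ha0, hb0] at this
    exact absurd this (lt_irrefl 0)
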